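/- Let n = 2N with N ≥ 2. For every l with 1 ≤ l ≤ N−1, the full-weighting restriction R maps the complementary (oscillatory) fine-grid Fourier mode w_{n−l}^h to −s_l times the coarse-grid mode: R w_{n−l}^h = −sin²(lπ/(2n)) · w_l^{2h}. -/

import Mathlib

open Real Matrix

/-- Fine-grid Fourier mode `w_l^h ∈ ℝ^{n-1}` for `n = 2N`:
components `sin (l j π / (2N))`, `j = 1, …, 2N-1`. -/
noncomputable def fineMode (N l : ℕ) : Fin (2 * N - 1) → ℝ :=
  fun j => Real.sin (l * ((j : ℕ) + 1) * Real.pi / (2 * N))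

/-- Coarse-grid Fourier mode `w_l^{2h} ∈ ℝ^{N-1}`:
components `sin (l i π / N)`, `i = 1, …, N-1`. -/
noncomputable def coarseMode (N l : ℕ) : Fin (N - 1) → ℝ :=
  fun i => Real.sin (l * ((i : ℕ) + 1) * Real.pi / N)

/-- Full-weighting restriction: the `(N-1)×(2N-1)` matrix with
`R_{i,2i-1} = R_{i,2i+1} = 1/4`, `R_{i,2i} = 1/2` and all other entries zero. -/
noncomputable def fullWeighting (N : ℕ) : Matrix (Fin (N - 1)) (Fin (2 * N - 1)) ℝ :=
  Matrix.of fun i j =>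
    if (j : ℕ) + 1 = 2 * ((i : ℕ) + 1) then 1 / 2
    else if (j : ℕ) + 2 = 2 * ((i : ℕ) + 1) ∨ (j : ℕ) = 2 * ((i : ℕ) + 1) then 1 / 4
    else 0

/-- for `n = 2N`, `N ≥ 2` and `1 ≤ l ≤ N-1`, full weighting maps the
oscillatory fine mode `w_{n-l}^h` to `-sin²(lπ/(2n)) · w_l^{2h}`. -/
theorem fullWeighting_oscillatory_mode (N : ℕ) (hN : 2 ≤ N) (l : ℕ)
    (hl1 : 1 ≤ l) (hl2 : l ≤ N - 1) :
    (fullWeighting N).mulVec (fineMode N (2 * N - l))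
      = (-(Real.sin (l * Real.pi / (2 * (2 * N))) ^ 2)) • coarseMode N l := by
  funext i
  have hi : (i : ℕ) < N - 1 := i.2
  have hNpos : (0:ℝ) < (N : ℝ) := by positivity
  -- the three relevant column indices
  have hb0 : 2 * (i : ℕ) < 2 * N - 1 := by omega
  have hb1 : 2 * (i : ℕ) + 1 < 2 * N - 1 := by omega
  have hb2 : 2 * (i : ℕ) + 2 < 2 * N - 1 := by omega
  set j0 : Fin (2 * N - 1) := ⟨2 * (i : ℕ), hb0⟩
  set j1 : Fin (2 * N - 1) := ⟨2 * (i : ℕ) + 1, hb1⟩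
  set j2 : Fin (2 * N - 1) := ⟨2 * (i : ℕ) + 2, hb2⟩
  have key : (fullWeighting N).mulVec (fineMode N (2 * N - l)) i
      = fullWeighting N i j0 * fineMode N (2 * N - l) j0
        + fullWeighting N i j1 * fineMode N (2 * N - l) j1
        + fullWeighting N i j2 * fineMode N (2 * N - l) j2 := by
    have hsub : ({j0, j1, j2} : Finset (Fin (2 * N - 1))) ⊆ Finset.univ :=
      Finset.subset_univ _
    have hzero : ∀ j ∈ (Finset.univ : Finset (Fin (2 * N - 1))),
        j ∉ ({j0, j1, j2} : Finset (Fin (2 * N - 1))) →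
        fullWeighting N i j * fineMode N (2 * N - l) j = 0 := by
      intro j _ hj
      simp only [Finset.mem_insert, Finset.mem_singleton, not_or] at hj
      obtain ⟨h0, h1, h2⟩ := hj
      have h0' : (j : ℕ) ≠ 2 * (i : ℕ) := fun h => h0 (Fin.ext h)
      have h1' : (j : ℕ) ≠ 2 * (i : ℕ) + 1 := fun h => h1 (Fin.ext h)
      have h2' : (j : ℕ) ≠ 2 * (i : ℕ) + 2 := fun h => h2 (Fin.ext h)
      simp only [fullWeighting, Matrix.of_apply]
      split_ifs with hc1 hc2
      · omega
      · omega
      · ring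
    rw [Matrix.mulVec, dotProduct, ← Finset.sum_subset hsub hzero]
    have hne01 : j0 ≠ j1 := by simp [j0, j1, Fin.ext_iff]
    have hne02 : j0 ≠ j2 := by simp [j0, j2, Fin.ext_iff]
    have hne12 : j1 ≠ j2 := by simp [j1, j2, Fin.ext_iff]
    rw [Finset.sum_insert (by simp [hne01, hne02]),
      Finset.sum_insert (by simp [hne12]), Finset.sum_singleton]
    ring
  rw [key]
  -- evaluate the matrix entries
  have e0 : fullWeighting N i j0 = 1 / 4 := by
    simp only [fullWeighting, Matrix.of_apply, j0]
    rw [if_neg (by omega), if_pos (by omega)]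
  have e1 : fullWeighting N i j1 = 1 / 2 := by
    simp only [fullWeighting, Matrix.of_apply, j1]
    rw [if_pos (by omega)]
  have e2 : fullWeighting N i j2 = 1 / 4 := by
    simp only [fullWeighting, Matrix.of_apply, j2]
    rw [if_neg (by omega), if_pos (by omega)]
  rw [e0, e1, e2]
  -- evaluate the fine mode: sin ((2N - l) k π / (2N)) = -(-1)^k sin (l k π / (2N))
  have hl2N : l ≤ 2 * N := by omega
  have hcast : ((2 * N - l : ℕ) : ℝ) = 2 * (N : ℝ) - l := by
    push_cast [Nat.cast_sub hl2N]; ring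
  have fm : ∀ (j : Fin (2 * N - 1)),
      fineMode N (2 * N - l) j
        = -((-1) ^ ((j : ℕ) + 1) * Real.sin (l * ((j : ℕ) + 1) * Real.pi / (2 * N))) := by
    intro j
    have harg : ((2 * N - l : ℕ) : ℝ) * ((j : ℕ) + 1) * Real.pi / (2 * N)
        = ((j : ℕ) + 1 : ℕ) * Real.pi - l * ((j : ℕ) + 1) * Real.pi / (2 * N) := by
      rw [hcast]
      push_cast
      field_simp
    rw [fineMode, harg, Real.sin_nat_mul_pi_sub]
  rw [fm j0, fm j1, fm j2]
  simp only [j0, j1, j2]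
  have hpow0 : ((-1 : ℝ)) ^ (2 * (i : ℕ) + 1) = -1 := by
    rw [pow_succ, pow_mul]; norm_num
  have hpow1 : ((-1 : ℝ)) ^ (2 * (i : ℕ) + 1 + 1) = 1 := by
    rw [pow_succ, hpow0]; norm_num
  have hpow2 : ((-1 : ℝ)) ^ (2 * (i : ℕ) + 2 + 1) = -1 := by
    rw [pow_succ, hpow1]; norm_num
  rw [hpow0, hpow1, hpow2]
  -- now pure trigonometry
  set b : ℝ := (l : ℝ) * Real.pi / (2 * N) with hb
  set a : ℝ := (l : ℝ) * ((i : ℕ) + 1) * Real.pi / N with ha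
  have harg0 : (l : ℝ) * (↑(2 * (i : ℕ)) + 1) * Real.pi / (2 * N) = a - b := by
    push_cast; rw [hb, ha]; ring
  have harg1 : (l : ℝ) * (↑(2 * (i : ℕ) + 1) + 1) * Real.pi / (2 * N) = a := by
    push_cast; rw [ha]; ring
  have harg2 : (l : ℝ) * (↑(2 * (i : ℕ) + 2) + 1) * Real.pi / (2 * N) = a + b := by
    push_cast; rw [hb, ha]; ring
  have hargR : (l : ℝ) * Real.pi / (2 * (2 * N)) = b / 2 := by
    rw [hb]; ring
  rw [harg0, harg1, harg2, hargR]
  have hcosb : Real.cos b = 1 - 2 * Real.sin (b / 2) ^ 2 := by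
    have h1 := Real.cos_two_mul (b / 2)
    have h2 := Real.sin_sq_add_cos_sq (b / 2)
    rw [show 2 * (b / 2) = b by ring] at h1
    linarith
  rw [Real.sin_sub, Real.sin_add]
  simp only [Pi.smul_apply, coarseMode, smul_eq_mul]
  rw [ha] at *
  rw [hcosb]
  ring
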